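/- arXiv:2604.06357 — 5 statements merged into one kernel-verified Lean document; each statement's English description precedes it below -/
import Mathlib

section
/- Let T be a tree, 𝒯 a collection of subtrees of T, and k ≥ 0 an integer. If every subcollection 𝒯' ⊆ 𝒯 of size at most k+1 can be pierced by a set of at most k edges of T (i.e., there exist at most k edges of T such that every subtree in 𝒯' contains a vertex incident to one of these edges), then the whole collection 𝒯 can be pierced by at most k edges of T. -/
open SimpleGraph Walk

section Aux

set_option linter.unusedSectionVars false

variable {V : Type*} [Fintype V] [DecidableEq V] {T : SimpleGraph V}

private lemma subgraph_finite (T : SimpleGraph V) : Finite T.Subgraph := by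
  classical
  exact Finite.of_injective (fun S => (S.verts, S.Adj))
    (fun S1 S2 h =>
      SimpleGraph.Subgraph.ext (congrArg Prod.fst h) (congrArg Prod.snd h))

/-- uniqueness of paths in a tree -/
private lemma tree_path_eq (hT : T.IsTree) {u v : V} {p q : T.Walk u v}
    (hp : p.IsPath) (hq : q.IsPath) : p = q := by
  have := hT.IsAcyclic.path_unique ⟨p, hp⟩ ⟨q, hq⟩
  exact congrArg Subtype.val this

/-- the canonical geodesic path -/
private noncomputable def geo (hT : T.IsTree) (u v : V) : T.Walk u v :=
  (hT.isConnected.exists_path_of_dist u v).choose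

private lemma geo_isPath (hT : T.IsTree) (u v : V) : (geo hT u v).IsPath :=
  (hT.isConnected.exists_path_of_dist u v).choose_spec.1

private lemma geo_length (hT : T.IsTree) (u v : V) : (geo hT u v).length = T.dist u v :=
  (hT.isConnected.exists_path_of_dist u v).choose_spec.2

/-- the support of the unique path is contained in the support of every walk -/
private lemma support_geo_subset (hT : T.IsTree) {u v : V} (w : T.Walk u v) :
    (geo hT u v).support ⊆ w.support := by
  have h1 : w.bypass = geo hT u v := tree_path_eq hT w.bypass_isPath (geo_isPath hT u v)
  rw [← h1]
  exact w.support_bypass_subset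

private lemma dist_add_of_mem_geo (hT : T.IsTree) {u v w : V}
    (hv : v ∈ (geo hT u w).support) : T.dist u w = T.dist u v + T.dist v w := by
  have h1 : ((geo hT u w).takeUntil v hv).append ((geo hT u w).dropUntil v hv) = geo hT u w :=
    (geo hT u w).take_spec hv
  have h2 : ((geo hT u w).takeUntil v hv).length + ((geo hT u w).dropUntil v hv).length
      = (geo hT u w).length := by
    rw [← SimpleGraph.Walk.length_append, h1]
  have h3 := SimpleGraph.dist_le ((geo hT u w).takeUntil v hv)
  have h4 := SimpleGraph.dist_le ((geo hT u w).dropUntil v hv)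
  have h5 := hT.isConnected.dist_triangle (u := u) (v := v) (w := w)
  have h6 := geo_length hT u w
  omega

/-- connected subgraphs contain the geodesic between any two of their vertices -/
private lemma geo_subset_of_connected (hT : T.IsTree) {S : T.Subgraph} (hS : S.Connected)
    {u w : V} (hu : u ∈ S.verts) (hw : w ∈ S.verts) :
    ∀ x ∈ (geo hT u w).support, x ∈ S.verts := by
  obtain ⟨W0⟩ := hS ⟨u, hu⟩ ⟨w, hw⟩
  have hsub := support_geo_subset hT (W0.map S.hom)
  intro x hx
  have hx' := hsub hx
  rw [SimpleGraph.Walk.support_map] at hx'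
  obtain ⟨⟨y, hy⟩, _, rfl⟩ := List.mem_map.mp hx'
  exact hy

/-- Lemma A: the minimal-distance vertex of a connected subgraph lies on the geodesic
from any vertex of the subgraph to the root. -/
private lemma top_mem_geo (hT : T.IsTree) {S : T.Subgraph} (hS : S.Connected) {r v₀ : V}
    (hv₀ : v₀ ∈ S.verts) (hmin : ∀ y ∈ S.verts, T.dist r v₀ ≤ T.dist r y)
    {a : V} (ha : a ∈ S.verts) : v₀ ∈ (geo hT a r).support := by
  set Q1 := geo hT a v₀ with hQ1
  set Q2 := geo hT v₀ r with hQ2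
  have key : ∀ y, y ∈ Q1.support → y ∈ Q2.support → y = v₀ := by
    intro y hy1 hy2
    have hyS : y ∈ S.verts := geo_subset_of_connected hT hS ha hv₀ y hy1
    have hd : T.dist v₀ r = T.dist v₀ y + T.dist y r := dist_add_of_mem_geo hT hy2
    have h1 : T.dist r v₀ ≤ T.dist r y := hmin y hyS
    rw [SimpleGraph.dist_comm] at h1
    have h2 : T.dist r v₀ = T.dist v₀ r := SimpleGraph.dist_comm ..
    have h3 : T.dist y r = T.dist r y := SimpleGraph.dist_comm ..
    have h0 : T.dist v₀ y = 0 := by omega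
    exact ((hT.isConnected.dist_eq_zero_iff).mp h0).symm
  have hW : (Q1.append Q2).IsPath := by
    rw [SimpleGraph.Walk.isPath_def, SimpleGraph.Walk.support_append]
    refine List.Nodup.append ((geo_isPath hT a v₀).support_nodup) ?_ ?_
    · exact ((geo_isPath hT v₀ r).support_nodup).tail
    · intro y hy1 hy2
      have hy2' : y ∈ Q2.support := List.mem_of_mem_tail hy2
      have hyv := key y hy1 hy2'
      have hn : Q2.support.Nodup := (geo_isPath hT v₀ r).support_nodup
      have hc : Q2.support = v₀ :: Q2.support.tail := Q2.support_eq_cons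
      rw [hc] at hn
      exact (List.nodup_cons.mp hn).1 (hyv ▸ hy2)
  have heq : Q1.append Q2 = geo hT a r := tree_path_eq hT hW (geo_isPath hT a r)
  rw [← heq]
  rw [SimpleGraph.Walk.mem_support_append_iff]
  exact Or.inl Q1.end_mem_support

end Aux

/-- **Edge Helly Theorem.** Let `T` be a tree, `𝒯` a collection of subtrees of `T`
(connected subgraphs), and `k ≥ 0`. If every subcollection of `𝒯` of size at most `k+1`
can be pierced by at most `k` edges of `T`, then `𝒯` can be pierced by at most `k`
edges of `T`. -/
theorem edge_helly_for_trees {V : Type*} [Fintype V] (T : SimpleGraph V) (hT : T.IsTree)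
    (𝒯 : Set T.Subgraph) (h𝒯 : ∀ T' ∈ 𝒯, T'.Connected) (k : ℕ)
    (h : ∀ 𝒯' ⊆ 𝒯, 𝒯'.Finite → 𝒯'.ncard ≤ k + 1 →
      ∃ E ⊆ T.edgeSet, E.Finite ∧ E.ncard ≤ k ∧
        ∀ T' ∈ 𝒯', ∃ v ∈ T'.verts, ∃ e ∈ E, v ∈ e) :
    ∃ E ⊆ T.edgeSet, E.Finite ∧ E.ncard ≤ k ∧
      ∀ T' ∈ 𝒯, ∃ v ∈ T'.verts, ∃ e ∈ E, v ∈ e := by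
  classical
  induction k generalizing 𝒯 with
  | zero =>
    refine ⟨∅, by simp, Set.finite_empty, by simp, ?_⟩
    intro T' hT'
    obtain ⟨E, hE, hEf, hEc, hp⟩ := h {T'} (by simpa) (Set.finite_singleton _)
      (by simp)
    have hE0 : E = ∅ := (Set.ncard_eq_zero hEf).mp (Nat.le_zero.mp hEc)
    obtain ⟨v, hv, e, he, _⟩ := hp T' rfl
    rw [hE0] at he
    exact absurd he (Set.notMem_empty e)
  | succ k ih =>
    rcases Set.eq_empty_or_nonempty 𝒯 with hemp | ⟨S0, hS0⟩
    · exact ⟨∅, by simp, Set.finite_empty, by simp, by simp [hemp]⟩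
    have hsgf : Finite T.Subgraph := subgraph_finite T
    have hfin : 𝒯.Finite := Set.toFinite 𝒯
    -- choose for each member its closest-to-root vertex
    obtain ⟨r, _⟩ := (h𝒯 S0 hS0).nonempty
    have hVne : Nonempty V := ⟨r⟩
    have hm : ∀ S ∈ 𝒯, ∃ v ∈ S.verts, ∀ y ∈ S.verts, T.dist r v ≤ T.dist r y :=
      fun S hS => Set.exists_min_image S.verts (T.dist r) (Set.toFinite _)
        (h𝒯 S hS).nonempty
    choose! m hm1 hm2 using hm
    obtain ⟨T₀, hT₀, hmax⟩ :=
      Set.exists_max_image 𝒯 (fun S => T.dist r (m S)) hfin ⟨S0, hS0⟩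
    set v₀ := m T₀ with hv₀def
    have hv₀T₀ : v₀ ∈ T₀.verts := hm1 T₀ hT₀
    by_cases h0 : v₀ = r
    · -- every subtree contains `r`; one edge at `r` suffices
      have hall : ∀ S ∈ 𝒯, r ∈ S.verts := by
        intro S hS
        have h1 := hmax S hS
        rw [h0, SimpleGraph.dist_self, Nat.le_zero] at h1
        have h2 := (hT.isConnected.dist_eq_zero_iff).mp h1
        rw [h2]
        exact hm1 S hS
      -- V is nontrivial since some edge exists
      obtain ⟨E0, hE0sub, _, _, hp0⟩ := h {S0} (by simpa) (Set.finite_singleton _)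
        (by rw [Set.ncard_singleton]; omega)
      obtain ⟨v, hv, e, he, hve⟩ := hp0 S0 rfl
      have he' : e ∈ T.edgeSet := hE0sub he
      have hnt : ∃ u : V, u ≠ r := by
        induction e using Sym2.ind with
        | _ c d =>
          have hadj : T.Adj c d := he'
          by_cases hc : c = r
          · exact ⟨d, fun hd => hadj.ne (hc.trans hd.symm)⟩
          · exact ⟨c, hc⟩
      obtain ⟨u, hu⟩ := hnt
      have hdu : 0 < T.dist r u := hT.isConnected.pos_dist_of_ne (Ne.symm hu)
      have hlen : 0 < (geo hT r u).length := by rw [geo_length]; exact hdu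
      have hadj : T.Adj r ((geo hT r u).getVert 1) := by
        have := (geo hT r u).adj_getVert_succ (i := 0) hlen
        rwa [SimpleGraph.Walk.getVert_zero] at this
      refine ⟨{s(r, (geo hT r u).getVert 1)}, by simpa using hadj, Set.finite_singleton _,
        by simp, ?_⟩
      intro S hS
      exact ⟨r, hall S hS, _, rfl, by simp⟩
    · -- main case: v₀ ≠ r
      have hd0 : 0 < T.dist v₀ r := hT.isConnected.pos_dist_of_ne h0
      have hlen : 0 < (geo hT v₀ r).length := by rw [geo_length]; exact hd0
      set p := (geo hT v₀ r).getVert 1 with hpdef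
      have hadj : T.Adj v₀ p := by
        have := (geo hT v₀ r).adj_getVert_succ (i := 0) hlen
        rwa [SimpleGraph.Walk.getVert_zero] at this
      -- Key Lemma: any edge incident to T₀ and to S forces v₀ or p into S
      have KL : ∀ S ∈ 𝒯, ∀ a ∈ T₀.verts, ∀ x ∈ S.verts, (x = a ∨ T.Adj a x) →
          v₀ ∈ S.verts ∨ p ∈ S.verts := by
        intro S hS a ha x hx hcase
        by_cases hvx : v₀ ∈ (geo hT x r).support
        · -- v₀ lies on the geodesic from x to r; route through m S
          have hms : m S ∈ S.verts := hm1 S hS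
          have hmax' : T.dist r (m S) ≤ T.dist r v₀ := hmax S hS
          have hsub := support_geo_subset hT ((geo hT x (m S)).append (geo hT (m S) r))
          have hvW := hsub hvx
          rw [SimpleGraph.Walk.mem_support_append_iff] at hvW
          rcases hvW with hv1 | hv2
          · exact Or.inl (geo_subset_of_connected hT (h𝒯 S hS) hx hms v₀ hv1)
          · have hdd : T.dist (m S) r = T.dist (m S) v₀ + T.dist v₀ r :=
              dist_add_of_mem_geo hT hv2
            have e1 : T.dist (m S) r = T.dist r (m S) := SimpleGraph.dist_comm ..
            have e2 : T.dist v₀ r = T.dist r v₀ := SimpleGraph.dist_comm ..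
            have h00 : T.dist (m S) v₀ = 0 := by omega
            have : m S = v₀ := (hT.isConnected.dist_eq_zero_iff).mp h00
            exact Or.inl (this ▸ hms)
        · have hva : v₀ ∈ (geo hT a r).support :=
            top_mem_geo hT (h𝒯 T₀ hT₀) hv₀T₀ (hm2 T₀ hT₀) ha
          rcases hcase with rfl | hax
          · exact absurd hva hvx
          · by_cases hav : a = v₀
            · subst hav
              -- the walk cons (a~x) (geo x r) is a path from a = v₀ to r
              have hP : (SimpleGraph.Walk.cons hax (geo hT x r)).IsPath :=
                SimpleGraph.Walk.IsPath.cons (geo_isPath hT x r) hvx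
              have heq : SimpleGraph.Walk.cons hax (geo hT x r) = geo hT v₀ r :=
                tree_path_eq hT hP (geo_isPath hT v₀ r)
              have hpx : p = x := by
                rw [hpdef, ← heq, SimpleGraph.Walk.getVert_cons_succ, SimpleGraph.Walk.getVert_zero]
              exact Or.inr (hpx ▸ hx)
            · exfalso
              have hsub := support_geo_subset hT (SimpleGraph.Walk.cons hax (geo hT x r))
              have := hsub hva
              rw [SimpleGraph.Walk.support_cons, List.mem_cons] at this
              rcases this with hva2 | hva3
              · exact hav hva2.symm
              · exact hvx hva3
      -- split off the subtrees pierced by e₀ = s(v₀, p)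
      set 𝒯₁ : Set T.Subgraph := {S ∈ 𝒯 | ¬ (v₀ ∈ S.verts ∨ p ∈ S.verts)} with h𝒯₁
      have h𝒯₁sub : 𝒯₁ ⊆ 𝒯 := fun S hS => hS.1
      have hIH : ∀ 𝒯' ⊆ 𝒯₁, 𝒯'.Finite → 𝒯'.ncard ≤ k + 1 →
          ∃ E ⊆ T.edgeSet, E.Finite ∧ E.ncard ≤ k ∧
            ∀ T' ∈ 𝒯', ∃ v ∈ T'.verts, ∃ e ∈ E, v ∈ e := by
        intro 𝒯' h'sub h'fin h'card
        obtain ⟨E, hEsub, hEfin, hEcard, hEp⟩ := h (insert T₀ 𝒯')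
          (Set.insert_subset hT₀ (h'sub.trans h𝒯₁sub)) (h'fin.insert T₀)
          (le_trans (Set.ncard_insert_le _ _) (by omega))
        obtain ⟨v, hvT₀, e, heE, hve⟩ := hEp T₀ (Set.mem_insert _ _)
        refine ⟨E \ {e}, (Set.diff_subset).trans hEsub, hEfin.diff,
          by
            have := Set.ncard_diff_singleton_of_mem heE
            omega, ?_⟩
        intro S hS𝒯'
        obtain ⟨x, hxS, e', he'E, hxe'⟩ := hEp S (Set.mem_insert_of_mem _ hS𝒯')
        by_cases hee : e' = e
        · exfalso
          subst hee
          have hSP : v₀ ∈ S.verts ∨ p ∈ S.verts := by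
            apply KL S (h'sub.trans h𝒯₁sub hS𝒯') v hvT₀ x hxS
            by_cases hxv : x = v
            · exact Or.inl hxv
            · right
              have hee' : e' = s(x, v) := (Sym2.mem_and_mem_iff hxv).mp ⟨hxe', hve⟩
              have : T.Adj x v := by
                have := hEsub he'E
                rw [hee'] at this
                exact this
              exact this.symm
          exact (h'sub hS𝒯').2 hSP
        · exact ⟨x, hxS, e', ⟨he'E, hee⟩, hxe'⟩
      obtain ⟨E₁, hE₁sub, hE₁fin, hE₁card, hE₁p⟩ :=
        ih 𝒯₁ (fun S hS => h𝒯 S (h𝒯₁sub hS)) hIH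
      refine ⟨insert s(v₀, p) E₁, Set.insert_subset (by simpa using hadj) hE₁sub,
        hE₁fin.insert _, le_trans (Set.ncard_insert_le _ _) (by omega), ?_⟩
      intro S hS
      by_cases hSP : v₀ ∈ S.verts ∨ p ∈ S.verts
      · rcases hSP with hv | hp
        · exact ⟨v₀, hv, s(v₀, p), Set.mem_insert _ _, by simp⟩
        · exact ⟨p, hp, s(v₀, p), Set.mem_insert _ _, by simp⟩
      · obtain ⟨x, hxS, e, heE, hxe⟩ := hE₁p S ⟨hS, hSP⟩
        exact ⟨x, hxS, e, Set.mem_insert_of_mem _ heE, hxe⟩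
end

section
/- For any finite graphs H and G, there exists a set Φ of monomorphisms of H into G that is distinguishing and has size at least v(H)^{-v(H)} · mon(H,G). -/
/-- For any finite graphs `H` and `G`, there exists a distinguishing set `Φ` of
monomorphisms of `H` into `G` of size at least `v(H)^{-v(H)} · mon(H,G)`, i.e. with
`mon(H,G) ≤ |Φ| · v(H)^{v(H)}`. -/
theorem exists_large_distinguishing_family {α β : Type*} [Fintype α] [Fintype β]
    (H : SimpleGraph α) (G : SimpleGraph β) :
    ∃ Φ : Set (H →g G), (∀ f ∈ Φ, Function.Injective f) ∧
      (∀ f ∈ Φ, ∀ g ∈ Φ, ∀ x y : α, x ≠ y → f x ≠ g y) ∧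
      Nat.card {f : H →g G // Function.Injective f} ≤
        Φ.ncard * (Fintype.card α) ^ (Fintype.card α) := by
  classical
  haveI : Fintype (H →g G) :=
    Fintype.ofInjective (fun f => (f : α → β)) DFunLike.coe_injective
  set n := Fintype.card α with hn
  set b := Fintype.card β with hb
  rcases Nat.eq_zero_or_pos n with h0 | hnpos
  · -- α is empty
    haveI : IsEmpty α := Fintype.card_eq_zero_iff.mp h0
    refine ⟨{f | Function.Injective f}, fun f hf => hf, ?_, ?_⟩
    · intro f _ g _ x y hxy
      exact (IsEmpty.false x).elim
    · rw [h0, pow_zero, mul_one]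
      have : Nat.card {f : H →g G // Function.Injective f}
          = ({f | Function.Injective f} : Set (H →g G)).ncard :=
        Nat.card_coe_set_eq _
      exact this.le
  rcases Nat.eq_zero_or_pos (Nat.card {f : H →g G // Function.Injective f}) with hS | hS
  · exact ⟨∅, by simp, by simp, by
      simp only [Set.ncard_empty, zero_mul, Nat.le_zero]; exact hS⟩
  -- main case: α nonempty, some injective hom exists
  obtain ⟨f₀⟩ := Nat.card_pos_iff.mp hS |>.1
  have hnb : n ≤ b := Fintype.card_le_of_injective _ f₀.2
  have key : ∀ (f : H →g G), Function.Injective f →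
      Fintype.card {c : β → α // ∀ x, c (f x) = x} = n ^ (b - n) := by
    intro f hf
    have e : {c : β → α // ∀ x, c (f x) = x} ≃ ({y : β // y ∉ Set.range f} → α) := by
      refine
        { toFun := fun c y => c.1 y.1
          invFun := fun d => ⟨fun y => if h : ∃ x, f x = y then h.choose else d ⟨y, h⟩, ?_⟩
          left_inv := ?_
          right_inv := ?_ }
      · intro x
        have h : ∃ x', f x' = f x := ⟨x, rfl⟩
        simp only [dif_pos h]
        exact hf h.choose_spec
      · intro c
        ext y
        by_cases h : ∃ x, f x = y
        · simp only [dif_pos h]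
          have := c.2 h.choose
          rw [h.choose_spec] at this
          exact this.symm
        · simp [dif_neg h]
      · intro d
        funext y
        have h : ¬ ∃ x, f x = y.1 := y.2
        simp only [dif_neg h]
    rw [Fintype.card_congr e, Fintype.card_fun]
    congr 1
    have : Fintype.card {y : β // y ∈ Set.range f} = n := by
      rw [← Fintype.card_congr (Equiv.ofInjective _ hf)]
    rw [Fintype.card_subtype_compl, this]
  set S := {f : H →g G // Function.Injective f}
  set F : (β → α) → ℕ := fun c => Fintype.card {f : S // ∀ x, c (f.1 x) = x} with hF
  have swap : (Σ c : β → α, {f : S // ∀ x, c (f.1 x) = x}) ≃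
      (Σ f : S, {c : β → α // ∀ x, c (f.1 x) = x}) :=
    { toFun := fun p => ⟨p.2.1, p.1, p.2.2⟩
      invFun := fun p => ⟨p.2.1, p.1, p.2.2⟩
      left_inv := fun _ => rfl
      right_inv := fun _ => rfl }
  have hsum : ∑ c : β → α, F c = Nat.card S * n ^ (b - n) := by
    rw [← Fintype.card_sigma, Fintype.card_congr swap, Fintype.card_sigma,
      Nat.card_eq_fintype_card]
    rw [Finset.sum_congr rfl fun (f : S) _ => key f.1 f.2]
    simp [mul_comm]
  haveI : Nonempty α := Fintype.card_pos_iff.mp hnpos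
  -- pigeonhole
  have huniv : (Finset.univ : Finset (β → α)).Nonempty := Finset.univ_nonempty
  obtain ⟨c, -, hc⟩ := Finset.exists_max_image Finset.univ F huniv
  have hbound : ∑ c : β → α, F c ≤ (Fintype.card (β → α)) * F c := by
    calc ∑ c' : β → α, F c' ≤ ∑ _c' : β → α, F c :=
          Finset.sum_le_sum fun i _ => hc i (Finset.mem_univ i)
      _ = (Fintype.card (β → α)) * F c := by simp [Finset.sum_const, mul_comm]
  rw [hsum, Fintype.card_fun] at hbound
  have hpow : n ^ b = n ^ n * n ^ (b - n) := by
    rw [← pow_add, Nat.add_sub_cancel' hnb]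
  rw [hpow] at hbound
  have hmain : Nat.card S ≤ F c * n ^ n := by
    have hpos : 0 < n ^ (b - n) := Nat.pow_pos hnpos
    have : Nat.card S * n ^ (b - n) ≤ (F c * n ^ n) * n ^ (b - n) := by
      calc Nat.card S * n ^ (b - n) ≤ n ^ n * n ^ (b - n) * F c := hbound
        _ = (F c * n ^ n) * n ^ (b - n) := by ring
    exact Nat.le_of_mul_le_mul_right this hpos
  refine ⟨{f | Function.Injective f ∧ ∀ x, c (f x) = x}, fun f hf => hf.1, ?_, ?_⟩
  · intro f hf g hg x y hxy hfg
    apply hxy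
    have : c (f x) = c (g y) := by rw [hfg]
    rwa [hf.2 x, hg.2 y] at this
  · have hΦ : ({f : H →g G | Function.Injective f ∧ ∀ x, c (f x) = x}).ncard = F c := by
      rw [← Nat.card_coe_set_eq, Nat.card_eq_fintype_card, hF]
      exact Fintype.card_congr
        ((Equiv.subtypeSubtypeEquivSubtypeInter
          (fun f : H →g G => Function.Injective f) (fun f => ∀ x, c (f x) = x)).symm)
    rw [hΦ]
    exact hmain
end

section
/- For every graph H and integer q ≥ 2, there exists an integer Q = Q(H,q) ≥ q such that: if G is a graph and Φ is a set of monomorphisms of H into G with |Φ| ≥ Q, then there exist a proper subset R ⊊ V(H) and distinct maps φ₁,…,φ_q ∈ Φ such that for all i ≠ j and all x, y ∈ V(H), φ_i(x) = φ_j(y) if and only if x = y and x ∈ R. -/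
open Finset in
open Finset

lemma sunflower_finset {β : Type} [DecidableEq β] :
    ∀ (n p : ℕ) (F : Finset (Finset β)), (∀ s ∈ F, s.card = n) →
      n.factorial * (p - 1) ^ n < F.card →
      ∃ (C : Finset β) (P : Finset (Finset β)), P ⊆ F ∧ P.card = p ∧
        ∀ s ∈ P, ∀ t ∈ P, s ≠ t → s ∩ t = C := by
  intro n
  induction n with
  | zero =>
    intro p F hcard hlt
    exfalso
    have hF : F ⊆ {∅} := by
      intro s hs
      simp [Finset.card_eq_zero.mp (hcard s hs)]
    have h1 := Finset.card_le_card hF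
    simp only [Finset.card_singleton] at h1
    simp only [Nat.factorial_zero, pow_zero, mul_one] at hlt
    omega
  | succ n ih =>
    intro p F hcard hlt
    classical
    set D := F.powerset.filter (fun M => ∀ s ∈ M, ∀ t ∈ M, s ≠ t → s ∩ t = ∅) with hD
    have hDne : D.Nonempty := ⟨∅, by simp [hD]⟩
    obtain ⟨M, hMD, hMmax⟩ := D.exists_max_image Finset.card hDne
    have hMF : M ⊆ F := Finset.mem_powerset.mp (Finset.mem_filter.mp hMD).1
    have hMdisj : ∀ s ∈ M, ∀ t ∈ M, s ≠ t → s ∩ t = ∅ := (Finset.mem_filter.mp hMD).2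
    by_cases hp : p ≤ M.card
    · obtain ⟨P, hPM, hPcard⟩ := Finset.exists_subset_card_eq hp
      exact ⟨∅, P, hPM.trans hMF, hPcard,
        fun s hs t ht hst => hMdisj s (hPM hs) t (hPM ht) hst⟩
    · have hMcard : M.card ≤ p - 1 := by omega
      set U := M.biUnion id with hU
      have hUcard : U.card ≤ (n + 1) * (p - 1) := by
        calc U.card ≤ ∑ s ∈ M, (id s).card := Finset.card_biUnion_le
          _ = ∑ s ∈ M, (n + 1) := by
              apply Finset.sum_congr rfl; intro s hs; exact hcard s (hMF hs)
          _ = M.card * (n + 1) := by rw [Finset.sum_const, smul_eq_mul]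
          _ ≤ (p - 1) * (n + 1) := Nat.mul_le_mul_right _ hMcard
          _ = (n + 1) * (p - 1) := Nat.mul_comm _ _
      have hmeet : ∀ s ∈ F, (s ∩ U).Nonempty := by
        intro s hsF
        rw [Finset.nonempty_iff_ne_empty]
        intro hdisj
        have hsM : s ∉ M := by
          intro hsM
          have hsub : s ⊆ U := fun a ha => Finset.mem_biUnion.mpr ⟨s, hsM, ha⟩
          have h2 : s ∩ U = s := Finset.inter_eq_left.mpr hsub
          rw [h2] at hdisj
          have := hcard s hsF
          simp [hdisj] at this
        have hnew : ∀ t ∈ M, s ∩ t = ∅ ∧ t ∩ s = ∅ := by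
          intro t ht
          have hsub : t ⊆ U := fun a ha => Finset.mem_biUnion.mpr ⟨t, ht, ha⟩
          have h1 : s ∩ t = ∅ := by
            apply Finset.subset_empty.mp
            rw [← hdisj]
            exact Finset.inter_subset_inter_left hsub
          exact ⟨h1, by rw [Finset.inter_comm]; exact h1⟩
        have hins : insert s M ∈ D := by
          rw [hD, Finset.mem_filter, Finset.mem_powerset]
          refine ⟨Finset.insert_subset hsF hMF, ?_⟩
          intro a ha b hb hab
          rcases Finset.mem_insert.mp ha with rfl | ha' <;>
            rcases Finset.mem_insert.mp hb with h | hb'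
          · exact absurd h.symm hab
          · exact (hnew b hb').1
          · subst h; exact (hnew a ha').2
          · exact hMdisj a ha' b hb' hab
        have hle := hMmax _ hins
        rw [Finset.card_insert_of_notMem hsM] at hle
        omega
      have hcover : F ⊆ U.biUnion (fun x => F.filter (fun s => x ∈ s)) := by
        intro s hs
        obtain ⟨x, hx⟩ := hmeet s hs
        exact Finset.mem_biUnion.mpr ⟨x, (Finset.mem_inter.mp hx).2,
          Finset.mem_filter.mpr ⟨hs, (Finset.mem_inter.mp hx).1⟩⟩
      have hex : ∃ x ∈ U, n.factorial * (p - 1) ^ n < (F.filter (fun s => x ∈ s)).card := by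
        by_contra hall
        push_neg at hall
        have h1 : F.card ≤ U.card * (n.factorial * (p - 1) ^ n) := by
          calc F.card ≤ (U.biUnion (fun x => F.filter (fun s => x ∈ s))).card :=
                Finset.card_le_card hcover
            _ ≤ ∑ x ∈ U, (F.filter (fun s => x ∈ s)).card := Finset.card_biUnion_le
            _ ≤ ∑ _x ∈ U, n.factorial * (p - 1) ^ n := Finset.sum_le_sum hall
            _ = U.card * (n.factorial * (p - 1) ^ n) := by rw [Finset.sum_const, smul_eq_mul]
        have h2 : F.card ≤ (n + 1).factorial * (p - 1) ^ (n + 1) := by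
          calc F.card ≤ U.card * (n.factorial * (p - 1) ^ n) := h1
            _ ≤ (n + 1) * (p - 1) * (n.factorial * (p - 1) ^ n) :=
                Nat.mul_le_mul_right _ hUcard
            _ = (n + 1).factorial * (p - 1) ^ (n + 1) := by
                rw [Nat.factorial_succ, pow_succ]; ring
        omega
      obtain ⟨x, hxU, hx⟩ := hex
      set F' := (F.filter (fun s => x ∈ s)).image (fun s => s.erase x) with hF'
      have hinjOn : Set.InjOn (fun s : Finset β => s.erase x) ↑(F.filter (fun s => x ∈ s)) := by
        intro a ha b hb hab
        simp only [Finset.coe_filter, Set.mem_setOf_eq] at ha hb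
        simp only at hab
        rw [← Finset.insert_erase ha.2, ← Finset.insert_erase hb.2, hab]
      have hF'card : n.factorial * (p - 1) ^ n < F'.card := by
        rw [hF', Finset.card_image_of_injOn hinjOn]
        exact hx
      have hF'sets : ∀ s ∈ F', s.card = n := by
        intro s hs
        obtain ⟨t, ht, rfl⟩ := Finset.mem_image.mp hs
        have h2 := Finset.mem_filter.mp ht
        rw [Finset.card_erase_of_mem h2.2, hcard t h2.1]
        omega
      obtain ⟨C', P', hP'F', hP'card, hP'pair⟩ := ih p F' hF'sets hF'card
      have hxnot : ∀ s ∈ F', x ∉ s := by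
        intro s hs
        obtain ⟨t, ht, rfl⟩ := Finset.mem_image.mp hs
        exact Finset.notMem_erase x t
      have hins_mem : ∀ s ∈ F', insert x s ∈ F := by
        intro s hs
        obtain ⟨t, ht, rfl⟩ := Finset.mem_image.mp hs
        have h2 := Finset.mem_filter.mp ht
        rw [Finset.insert_erase h2.2]
        exact h2.1
      refine ⟨insert x C', P'.image (insert x), ?_, ?_, ?_⟩
      · intro s hs
        obtain ⟨t, ht, rfl⟩ := Finset.mem_image.mp hs
        exact hins_mem t (hP'F' ht)
      · rw [Finset.card_image_of_injOn, hP'card]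
        intro a ha b hb hab
        rw [← Finset.erase_insert (hxnot a (hP'F' ha)),
          ← Finset.erase_insert (hxnot b (hP'F' hb)), hab]
      · intro s hs t ht hst
        obtain ⟨a, haP, rfl⟩ := Finset.mem_image.mp hs
        obtain ⟨b, hbP, rfl⟩ := Finset.mem_image.mp ht
        have hab : a ≠ b := fun h => hst (by rw [h])
        have h1 := hP'pair a haP b hbP hab
        ext z
        simp only [Finset.mem_inter, Finset.mem_insert]
        constructor
        · rintro ⟨hz1, hz2⟩
          rcases hz1 with rfl | hz1
          · exact Or.inl rfl
          · rcases hz2 with rfl | hz2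
            · exact Or.inl rfl
            · exact Or.inr (h1 ▸ Finset.mem_inter.mpr ⟨hz1, hz2⟩)
        · rintro (rfl | hz)
          · exact ⟨Or.inl rfl, Or.inl rfl⟩
          · have hz' : z ∈ a ∩ b := by rw [h1]; exact hz
            have h2 := Finset.mem_inter.mp hz'
            exact ⟨Or.inr h2.1, Or.inr h2.2⟩



/-- Sunflower lemma for monomorphisms: for every graph `H` and `q ≥ 2` there exists
`Q ≥ q` such that any collection `Φ` of at least `Q` monomorphisms of `H` into a graph
`G` contains `q` distinct maps `φ₁, …, φ_q` and a proper subset `R ⊊ V(H)` with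
`φ_i(x) = φ_j(y) ↔ x = y ∧ x ∈ R` for all `i ≠ j`. -/
theorem sunflower_for_monomorphisms {α : Type} [Fintype α] (H : SimpleGraph α)
    (q : ℕ) (hq : 2 ≤ q) :
    ∃ Q : ℕ, q ≤ Q ∧
      ∀ (β : Type) (G : SimpleGraph β) (Φ : Set (H →g G)),
        (∀ f ∈ Φ, Function.Injective f) → Q ≤ Φ.ncard →
        ∃ R : Set α, R ≠ Set.univ ∧
          ∃ φ : Fin q → (H →g G), (∀ i, φ i ∈ Φ) ∧ Function.Injective φ ∧
            ∀ i j : Fin q, i ≠ j → ∀ x y : α, (φ i) x = (φ j) y ↔ x = y ∧ x ∈ R := by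
  classical
  set n := Fintype.card α with hn
  set K := (n + 1) ^ n with hKdef
  set p := K * (q - 1) + 1 with hpdef
  set B := n.factorial * (p - 1) ^ n with hBdef
  set T := 2 ^ (n * n) with hTdef
  refine ⟨max q (T * (B + 1)), le_max_left _ _, ?_⟩
  intro β G Φ hinjΦ hQ
  have hq' : q ≤ Φ.ncard := le_trans (le_max_left _ _) hQ
  have hΦfin : Φ.Finite := by
    by_contra h
    have h2 : Φ.Infinite := h
    have := h2.ncard
    omega
  cases isEmpty_or_nonempty α with
  | inl hE =>
    exfalso
    obtain ⟨a, ha, b, hb, hab⟩ := (Set.one_lt_ncard hΦfin).mp (by omega)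
    exact hab (DFunLike.ext a b (fun x => isEmptyElim x))
  | inr hNE =>
    have hn1 : 1 ≤ n := Fintype.card_pos
    set Φ' := hΦfin.toFinset with hΦ'def
    have hΦ'card : Φ.ncard = Φ'.card := Set.ncard_eq_toFinset_card Φ hΦfin
    set img : (H →g G) → Finset β := fun f => Finset.univ.image ⇑f with himg
    set F := Φ'.image img with hFdef
    have hmemΦ : ∀ f ∈ Φ', f ∈ Φ := fun f hf => hΦfin.mem_toFinset.mp hf
    have hFsets : ∀ S ∈ F, S.card = n := by
      intro S hS
      obtain ⟨f, hf, rfl⟩ := Finset.mem_image.mp hS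
      rw [himg]
      simp only
      rw [Finset.card_image_of_injective _ (hinjΦ f (hmemΦ f hf)), Finset.card_univ]
    -- fiber bound
    have hfiber : ∀ S ∈ F, (Φ'.filter (fun f => img f = S)).card ≤ T := by
      intro S hS
      set Γ : (H →g G) → Finset (α × β) := fun g => Finset.univ.image (fun a => (a, g a))
        with hΓ
      have hΓinj : Function.Injective Γ := by
        intro g g' hgg
        apply DFunLike.ext g g'
        intro a
        have h1 : (a, g a) ∈ Γ g' := by
          rw [← hgg]; exact Finset.mem_image_of_mem _ (Finset.mem_univ a)
        obtain ⟨a', _, ha'⟩ := Finset.mem_image.mp h1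
        simp only [Prod.mk.injEq] at ha'
        obtain ⟨rfl, h⟩ := ha'
        exact h.symm
      have hmaps : ∀ g ∈ Φ'.filter (fun f => img f = S),
          Γ g ∈ ((Finset.univ : Finset α) ×ˢ S).powerset := by
        intro g hg
        rw [Finset.mem_powerset]
        intro z hz
        obtain ⟨a, _, rfl⟩ := Finset.mem_image.mp hz
        rw [Finset.mem_product]
        refine ⟨Finset.mem_univ a, ?_⟩
        have h2 := (Finset.mem_filter.mp hg).2
        rw [← h2]
        exact Finset.mem_image_of_mem _ (Finset.mem_univ a)
      calc (Φ'.filter (fun f => img f = S)).card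
          ≤ (((Finset.univ : Finset α) ×ˢ S).powerset).card :=
            Finset.card_le_card_of_injOn Γ hmaps hΓinj.injOn
        _ = 2 ^ (n * S.card) := by
            rw [Finset.card_powerset, Finset.card_product, Finset.card_univ]
        _ ≤ T := by
            rw [hTdef]
            exact Nat.pow_le_pow_right (by norm_num)
              (Nat.mul_le_mul_left _ (le_of_eq (hFsets S hS)))
    have hΦ'le : Φ'.card ≤ T * F.card := Finset.card_le_mul_card_image Φ' T hfiber
    have hFB : B < F.card := by
      have h1 : T * (B + 1) ≤ Φ'.card := by
        rw [← hΦ'card]; exact le_trans (le_max_right _ _) hQ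
      have hT0 : 0 < T := by rw [hTdef]; exact Nat.pow_pos (by norm_num)
      have h2 : T * (B + 1) ≤ T * F.card := le_trans h1 hΦ'le
      have := Nat.le_of_mul_le_mul_left h2 hT0
      omega
    obtain ⟨C, P, hPF, hPcard, hPpair⟩ := sunflower_finset n p F hFsets hFB
    have hK1 : 1 ≤ K := Nat.one_le_pow _ _ (by omega)
    have hp2 : 2 ≤ p := by
      have := Nat.mul_le_mul_left K (show 1 ≤ q - 1 by omega)
      rw [mul_one] at this
      omega
    -- card of C
    have hCcard : C.card ≤ n := by
      obtain ⟨S1, hS1, S2, hS2, hS12⟩ := Finset.one_lt_card.mp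
        (show 1 < P.card by omega)
      rw [← hPpair S1 hS1 S2 hS2 hS12]
      exact le_trans (Finset.card_le_card Finset.inter_subset_left)
        (le_of_eq (hFsets S1 (hPF hS1)))
    -- section
    have hsec : ∀ Sm : {S // S ∈ P}, ∃ f, f ∈ Φ' ∧ img f = Sm.1 := by
      intro Sm
      obtain ⟨f, hf, hf2⟩ := Finset.mem_image.mp (hPF Sm.2)
      exact ⟨f, hf, hf2⟩
    choose ψ hψ1 hψ2 using hsec
    set gfun : (H →g G) → (α → Option ↥C) :=
      fun f a => if h : f a ∈ C then some ⟨f a, h⟩ else none with hgfun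
    have htcard : (Finset.univ : Finset (α → Option ↥C)).card * (q - 1) < P.attach.card := by
      rw [Finset.card_attach, hPcard, Finset.card_univ]
      have h1 : Fintype.card (α → Option ↥C) = (C.card + 1) ^ n := by
        rw [Fintype.card_fun, Fintype.card_option, Fintype.card_coe]
      have h2 : (C.card + 1) ^ n ≤ K := by
        rw [hKdef]
        exact Nat.pow_le_pow_left (by omega) n
      calc Fintype.card (α → Option ↥C) * (q - 1) ≤ K * (q - 1) := by
            rw [h1]; exact Nat.mul_le_mul_right _ h2
        _ < p := by omega
    obtain ⟨key, _, hkey⟩ := Finset.exists_lt_card_fiber_of_mul_lt_card_of_maps_to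
      (fun Sm _ => Finset.mem_univ (gfun (ψ Sm))) htcard
    set Pq := P.attach.filter (fun Sm => gfun (ψ Sm) = key) with hPqdef
    obtain ⟨Pf, hPfsub, hPfcard⟩ := Finset.exists_subset_card_eq
      (show q ≤ Pq.card by omega)
    set e : Fin q → {S // S ∈ P} :=
      fun i => (Pf.equivFin.symm (Fin.cast hPfcard.symm i)).1 with he
    have heinj : Function.Injective e := by
      intro i j hij
      have h2 := Pf.equivFin.symm.injective (Subtype.val_injective hij)
      exact Fin.ext (by simpa using congrArg Fin.val h2)
    set φ : Fin q → (H →g G) := fun i => ψ (e i) with hφ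
    have hφΦ : ∀ i, φ i ∈ Φ := fun i => hmemΦ _ (hψ1 (e i))
    have hgy : ∀ i, gfun (φ i) = key := by
      intro i
      have h1 : e i ∈ Pq := hPfsub (Pf.equivFin.symm (Fin.cast hPfcard.symm i)).2
      exact (Finset.mem_filter.mp h1).2
    have hSne : ∀ i j, i ≠ j → (e i).1 ≠ (e j).1 := by
      intro i j hij h
      exact hij (heinj (Subtype.ext h))
    have hφinj : Function.Injective φ := by
      intro i j hij
      by_contra hne
      exact hSne i j hne (by rw [← hψ2 (e i), ← hψ2 (e j)]; exact congrArg img hij)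
    have hinj_i : ∀ i, Function.Injective (φ i) := fun i => hinjΦ _ (hφΦ i)
    set R : Set α := {x | (key x).isSome} with hR
    have hmemC : ∀ (i : Fin q) (x : α), φ i x ∈ C ↔ x ∈ R := by
      intro i x
      have h1 : gfun (φ i) x = key x := congrFun (hgy i) x
      rw [hgfun] at h1
      simp only at h1
      constructor
      · intro h
        rw [dif_pos h] at h1
        show (key x).isSome
        rw [← h1]; simp
      · intro h
        by_contra hc
        rw [dif_neg hc] at h1
        have h3 : (key x).isSome := h
        rw [← h1] at h3
        simp at h3
    have hval : ∀ (i : Fin q) (x : α) (c : ↥C), key x = some c → φ i x = c.1 := by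
      intro i x c hc
      have h1 : gfun (φ i) x = key x := congrFun (hgy i) x
      rw [hc, hgfun] at h1
      simp only at h1
      by_cases h : φ i x ∈ C
      · rw [dif_pos h] at h1
        exact congrArg Subtype.val (Option.some_injective _ h1)
      · rw [dif_neg h] at h1
        exact absurd h1 (by simp)
    have hagree : ∀ (i j : Fin q) (x : α), x ∈ R → φ i x = φ j x := by
      intro i j x hx
      obtain ⟨c, hc⟩ := Option.isSome_iff_exists.mp hx
      rw [hval i x c hc, hval j x c hc]
    have hmemS : ∀ (i : Fin q) (x : α), φ i x ∈ (e i).1 := by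
      intro i x
      rw [← hψ2 (e i)]
      exact Finset.mem_image_of_mem _ (Finset.mem_univ x)
    refine ⟨R, ?_, φ, hφΦ, hφinj, ?_⟩
    · intro hRuniv
      have h01 : (⟨0, by omega⟩ : Fin q) ≠ ⟨1, by omega⟩ := by
        intro h; simpa using congrArg Fin.val h
      have hS := hSne _ _ h01
      have hsub : (e ⟨0, by omega⟩).1 ⊆ C := by
        intro z hz
        rw [← hψ2 (e ⟨0, by omega⟩)] at hz
        obtain ⟨a, _, rfl⟩ := Finset.mem_image.mp hz
        exact (hmemC ⟨0, by omega⟩ a).mpr (by rw [hRuniv]; trivial)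
      have hC01 := hPpair _ (e ⟨0, by omega⟩).2 _ (e ⟨1, by omega⟩).2 hS
      have hsub2 : C ⊆ (e ⟨1, by omega⟩).1 := by
        intro z hz; rw [← hC01] at hz; exact (Finset.mem_inter.mp hz).2
      have heq := Finset.eq_of_subset_of_card_le (hsub.trans hsub2)
        (by rw [hFsets _ (hPF (e ⟨1, by omega⟩).2), hFsets _ (hPF (e ⟨0, by omega⟩).2)])
      exact hS heq
    · intro i j hij x x'
      have hCij := hPpair _ (e i).2 _ (e j).2 (hSne i j hij)
      constructor
      · intro h
        have hxC : φ i x ∈ C := by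
          rw [← hCij]
          exact Finset.mem_inter.mpr ⟨hmemS i x, h ▸ hmemS j x'⟩
        have hxR : x ∈ R := (hmemC i x).mp hxC
        have hx'R : x' ∈ R := (hmemC j x').mp (h ▸ hxC)
        have h2 : φ j x = φ j x' := by rw [← hagree i j x hxR, h]
        exact ⟨hinj_i j h2, hxR⟩
      · rintro ⟨rfl, hxR⟩
        exact hagree i j x hxR
end

section
/- Let k ≥ 2 and t be integers and let P_t be the path on vertices 1,…,t. Suppose T₁,…,T_{2k} are subpaths of P_t, T_i = [ℓ_i,r_i], satisfying the nice-tuple conditions with associated matching (i.e., there exist x₁<⋯<x_{2k} forming a matching with x_i ∈ V(T_i) \ ⋃_{j≠i}V(T_j)). If t ≢ 2 (mod k−1), then there exists an index i* with 1 < i* < 2k such that |V(T_{i*})| ≤ (t−3)/(k−1) − 1. -/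
/-- If `(T₁,…,T_{2k})` is a nice tuple of subpaths `T_i = [ℓ i, r i]` of the path on
`{1,…,t}` (induced by a matching `x₁ < ⋯ < x_{2k}` with `x_i ∈ T_i \ ⋃_{j≠i} T_j`;
here `0`-indexed, so edges are `x i, x (i+1)` for even `i`), and `t ≢ 2 (mod k−1)`,
then some `T_{i*}` with `1 < i* < 2k` (`1`-indexed) has
`|V(T_{i*})| ≤ (t−3)/(k−1) − 1`, i.e. `(|V(T_{i*})| + 1)·(k−1) ≤ t − 3`. -/
theorem nice_tuple_has_small_tree (k t : ℕ) (hk : 2 ≤ k)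
    (ℓ r x : Fin (2 * k) → ℕ)
    (hle : ∀ i, ℓ i ≤ r i)
    (hran : ∀ i, 1 ≤ ℓ i ∧ r i ≤ t)
    (hxmono : StrictMono x)
    (hmatch : ∀ i : Fin (2 * k), (i : ℕ) % 2 = 0 →
      ∀ hi : (i : ℕ) + 1 < 2 * k, x ⟨(i : ℕ) + 1, hi⟩ = x i + 1)
    (hmem : ∀ i, ℓ i ≤ x i ∧ x i ≤ r i)
    (hnot : ∀ i j, i ≠ j → ¬(ℓ j ≤ x i ∧ x i ≤ r j))
    (hmod : t % (k - 1) ≠ 2 % (k - 1)) :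
    ∃ i : Fin (2 * k), 0 < (i : ℕ) ∧ (i : ℕ) < 2 * k - 1 ∧
      (r i - ℓ i + 2) * (k - 1) ≤ t - 3 := by
  by_contra hcon
  push_neg at hcon
  have h2k : 4 ≤ 2 * k := by omega
  have hA : ∀ i j : Fin (2 * k), i < j → x i < ℓ j := by
    intro i j hij
    by_contra hle'
    push_neg at hle'
    have h1 := hmem i
    have h2 := hmem j
    have hx := hxmono hij
    exact hnot i j (ne_of_lt hij) ⟨hle', by omega⟩
  have hB : ∀ i j : Fin (2 * k), i < j → r i < x j := by
    intro i j hij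
    by_contra hle'
    push_neg at hle'
    have h1 := hmem i
    have h2 := hmem j
    have hx := hxmono hij
    exact hnot j i (ne_of_lt hij).symm ⟨by omega, hle'⟩
  have h0 : (0:ℕ) < 2*k := by omega
  have h1 : (1:ℕ) < 2*k := by omega
  have h3 : (3:ℕ) < 2*k := by omega
  have hlast : 2*k-1 < 2*k := by omega
  have hx01 : x ⟨1, h1⟩ = x ⟨0, h0⟩ + 1 := hmatch ⟨0, h0⟩ (by simp) h1
  have hx1 : 2 ≤ x ⟨1, h1⟩ := by
    have := (hmem ⟨0, h0⟩).1
    have := (hran ⟨0, h0⟩).1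
    omega
  have hxt : x ⟨2*k-1, hlast⟩ ≤ t := by
    have := (hmem ⟨2*k-1, hlast⟩).2
    have := (hran ⟨2*k-1, hlast⟩).2
    omega
  have ht3 : 3 ≤ t := by
    have hlt : x ⟨1, h1⟩ < x ⟨2*k-1, hlast⟩ :=
      hxmono (Fin.mk_lt_mk.mpr (by omega))
    omega
  set K := k - 1 with hK
  have hstep : ∀ m, m ≤ k - 2 → ∀ (ha : 2*m+1 < 2*k) (hb : 2*m+3 < 2*k),
      x ⟨2*m+1, ha⟩ * K + (t-2) ≤ x ⟨2*m+3, hb⟩ * K := by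
    intro m hm ha hb
    have h2' : 2*m+2 < 2*k := by omega
    have h0' : 2*m < 2*k := by omega
    have hmat1 : x ⟨2*m+1, ha⟩ = x ⟨2*m, h0'⟩ + 1 :=
      hmatch ⟨2*m, h0'⟩ (by simp) ha
    have hmat2 : x ⟨2*m+3, hb⟩ = x ⟨2*m+2, h2'⟩ + 1 :=
      hmatch ⟨2*m+2, h2'⟩ (by simp [Nat.add_mod]) hb
    have hA1 : x ⟨2*m, h0'⟩ < ℓ ⟨2*m+1, ha⟩ :=
      hA _ _ (Fin.mk_lt_mk.mpr (by omega))
    have hxeq : x ⟨2*m+1, ha⟩ = ℓ ⟨2*m+1, ha⟩ := by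
      have := (hmem ⟨2*m+1, ha⟩).1
      omega
    have hB1 : r ⟨2*m+1, ha⟩ < x ⟨2*m+2, h2'⟩ :=
      hB _ _ (Fin.mk_lt_mk.mpr (by omega))
    have hgap : r ⟨2*m+1, ha⟩ - ℓ ⟨2*m+1, ha⟩ + 2 ≤ x ⟨2*m+3, hb⟩ - x ⟨2*m+1, ha⟩ := by
      have := hle ⟨2*m+1, ha⟩
      omega
    have hc := hcon ⟨2*m+1, ha⟩ (show 0 < 2*m+1 by omega) (show 2*m+1 < 2*k-1 by omega)
    have hc2 : t - 2 ≤ (r ⟨2*m+1, ha⟩ - ℓ ⟨2*m+1, ha⟩ + 2) * K := by omega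
    have hmul : (r ⟨2*m+1, ha⟩ - ℓ ⟨2*m+1, ha⟩ + 2) * K ≤
        (x ⟨2*m+3, hb⟩ - x ⟨2*m+1, ha⟩) * K := Nat.mul_le_mul_right K hgap
    have hsub : (x ⟨2*m+3, hb⟩ - x ⟨2*m+1, ha⟩) * K =
        x ⟨2*m+3, hb⟩ * K - x ⟨2*m+1, ha⟩ * K := Nat.sub_mul _ _ _
    have hmono : x ⟨2*m+1, ha⟩ * K ≤ x ⟨2*m+3, hb⟩ * K :=
      Nat.mul_le_mul_right K (le_of_lt (hxmono (Fin.mk_lt_mk.mpr (by omega))))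
    omega
  have Q : ∀ d, d ≤ k - 1 → ∀ (h : 2*(k-1-d)+1 < 2*k),
      x ⟨2*(k-1-d)+1, h⟩ * K + d*(t-2) ≤ x ⟨2*k-1, hlast⟩ * K := by
    intro d
    induction d with
    | zero =>
      intro _ h
      have he : (⟨2*(k-1-0)+1, h⟩ : Fin (2*k)) = ⟨2*k-1, hlast⟩ :=
        Fin.mk_eq_mk.mpr (by omega)
      rw [he]
      omega
    | succ d ih =>
      intro hd h
      have hm : k-1-(d+1) ≤ k-2 := by omega
      have hb : 2*(k-1-(d+1))+3 < 2*k := by omega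
      have hs := hstep (k-1-(d+1)) hm h hb
      have hrec := ih (by omega) (by omega)
      have he : (⟨2*(k-1-d)+1, by omega⟩ : Fin (2*k)) = ⟨2*(k-1-(d+1))+3, hb⟩ :=
        Fin.mk_eq_mk.mpr (by omega)
      rw [he] at hrec
      have hdm : (d+1)*(t-2) = d*(t-2) + (t-2) := by ring
      omega
  have hQ := Q (k-2) (by omega) (by omega)
  have he3 : (⟨2*(k-1-(k-2))+1, by omega⟩ : Fin (2*k)) = ⟨3, h3⟩ :=
    Fin.mk_eq_mk.mpr (by omega)
  rw [he3] at hQ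
  have hg0 : x ⟨1,h1⟩ * K + (t-2) ≤ x ⟨3,h3⟩ * K := hstep 0 (by omega) h1 h3
  -- final arithmetic
  have hxm13 : x ⟨1,h1⟩ ≤ x ⟨3,h3⟩ := le_of_lt (hxmono (Fin.mk_lt_mk.mpr (by omega)))
  have hub : x ⟨2*k-1, hlast⟩ * K ≤ t * K := Nat.mul_le_mul_right K hxt
  have htK : t * K = (t-2) * K + 2 * K := by
    have h2t : t = (t-2) + 2 := by omega
    calc t * K = ((t-2)+2) * K := by rw [← h2t]
    _ = (t-2)*K + 2*K := by ring
  have hlb : 2 * K ≤ x ⟨1,h1⟩ * K := Nat.mul_le_mul_right K hx1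
  have hk2 : (t-2) * K = (k-2)*(t-2) + (t-2) := by
    rw [mul_comm]
    have hKe : K = (k-2)+1 := by omega
    rw [hKe, Nat.succ_mul]
  have hsub : (x ⟨3,h3⟩ - x ⟨1,h1⟩) * K = x ⟨3,h3⟩ * K - x ⟨1,h1⟩ * K :=
    Nat.sub_mul _ _ _
  have hmono' : x ⟨1,h1⟩ * K ≤ x ⟨3,h3⟩ * K := Nat.mul_le_mul_right K hxm13
  have hEq : (x ⟨3,h3⟩ - x ⟨1,h1⟩) * K = t - 2 := by omega
  have hdvd : K ∣ t - 2 := ⟨x ⟨3,h3⟩ - x ⟨1,h1⟩, by rw [← hEq, mul_comm]⟩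
  obtain ⟨c, hc⟩ := hdvd
  apply hmod
  have ht : t = 2 + K * c := by omega
  rw [ht, Nat.add_mul_mod_self_left]
end

section
/- Let H be a graph, R ⊊ V(H), and n' a positive integer, and suppose H − R has at least k+1 connected components for some k ≥ 0. Then the graph H_R^{n'} contains at least (n')^{k+1} distinct copies of H as a subgraph. -/
open SimpleGraph

open scoped Classical

/-- The projection from the vertex set of the blowup `H_R^m` back to `V(H)`. -/
def blowupProj {α : Type*} (R : Set α) (m : ℕ) : (↥R ⊕ (Fin m × ↥Rᶜ)) → α :=
  Sum.elim Subtype.val (fun p => p.2.val)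

/-- Whether a vertex of `H_R^m` belongs to the `i`-th copy of `H`. -/
def blowupInCopy {α : Type*} (R : Set α) (m : ℕ) (i : Fin m) : (↥R ⊕ (Fin m × ↥Rᶜ)) → Prop :=
  Sum.elim (fun _ => True) (fun p => p.1 = i)

/-- The graph `H_R^m`: the union of `m` copies of `H` which agree on `R` and are
otherwise pairwise disjoint. -/
def blowupGraph {α : Type*} (H : SimpleGraph α) (R : Set α) (m : ℕ) :
    SimpleGraph (↥R ⊕ (Fin m × ↥Rᶜ)) where
  Adj a b := ∃ i : Fin m, blowupInCopy R m i a ∧ blowupInCopy R m i b ∧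
    H.Adj (blowupProj R m a) (blowupProj R m b)
  symm := by
    constructor
    rintro a b ⟨i, ha, hb, hadj⟩
    exact ⟨i, hb, ha, hadj.symm⟩
  loopless := by
    constructor
    rintro a ⟨i, -, -, hadj⟩
    exact hadj.ne rfl

/-- The embedding of `H` into `H_R^m` determined by a choice `f` of copy for each
connected component of `H − R`. -/
noncomputable def copyMap {α : Type*} (H : SimpleGraph α) (R : Set α) (m : ℕ)
    (f : (H.induce Rᶜ).ConnectedComponent → Fin m) (v : α) : (↥R ⊕ (Fin m × ↥Rᶜ)) :=
  if h : v ∈ R then Sum.inl ⟨v, h⟩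
  else Sum.inr (f ((H.induce Rᶜ).connectedComponentMk ⟨v, h⟩), ⟨v, h⟩)

lemma copyMap_of_mem {α : Type*} (H : SimpleGraph α) (R : Set α) (m : ℕ)
    (f : (H.induce Rᶜ).ConnectedComponent → Fin m) {v : α} (h : v ∈ R) :
    copyMap H R m f v = Sum.inl ⟨v, h⟩ := dif_pos h

lemma copyMap_of_not_mem {α : Type*} (H : SimpleGraph α) (R : Set α) (m : ℕ)
    (f : (H.induce Rᶜ).ConnectedComponent → Fin m) {v : α} (h : v ∉ R) :
    copyMap H R m f v = Sum.inr (f ((H.induce Rᶜ).connectedComponentMk ⟨v, h⟩), ⟨v, h⟩) :=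
  dif_neg h

lemma copyMap_proj {α : Type*} (H : SimpleGraph α) (R : Set α) (m : ℕ)
    (f : (H.induce Rᶜ).ConnectedComponent → Fin m) (v : α) :
    blowupProj R m (copyMap H R m f v) = v := by
  by_cases h : v ∈ R
  · rw [copyMap_of_mem H R m f h]; rfl
  · rw [copyMap_of_not_mem H R m f h]; rfl

lemma copyMap_injective {α : Type*} (H : SimpleGraph α) (R : Set α) (m : ℕ)
    (f : (H.induce Rᶜ).ConnectedComponent → Fin m) :
    Function.Injective (copyMap H R m f) := by
  intro u v h
  have := congrArg (blowupProj R m) h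
  rwa [copyMap_proj, copyMap_proj] at this

lemma copyMap_adj {α : Type*} (H : SimpleGraph α) (R : Set α) (m : ℕ) (hm : 1 ≤ m)
    (f : (H.induce Rᶜ).ConnectedComponent → Fin m) (u v : α) :
    (blowupGraph H R m).Adj (copyMap H R m f u) (copyMap H R m f v) ↔ H.Adj u v := by
  constructor
  · rintro ⟨i, -, -, hadj⟩
    rwa [copyMap_proj, copyMap_proj] at hadj
  · intro hadj
    by_cases hu : u ∈ R <;> by_cases hv : v ∈ R
    · rw [copyMap_of_mem H R m f hu, copyMap_of_mem H R m f hv]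
      exact ⟨⟨0, hm⟩, trivial, trivial, hadj⟩
    · rw [copyMap_of_mem H R m f hu, copyMap_of_not_mem H R m f hv]
      exact ⟨f ((H.induce Rᶜ).connectedComponentMk ⟨v, hv⟩), trivial, rfl, hadj⟩
    · rw [copyMap_of_not_mem H R m f hu, copyMap_of_mem H R m f hv]
      exact ⟨f ((H.induce Rᶜ).connectedComponentMk ⟨u, hu⟩), rfl, trivial, hadj⟩
    · have hcc : (H.induce Rᶜ).connectedComponentMk ⟨u, hu⟩ =
          (H.induce Rᶜ).connectedComponentMk ⟨v, hv⟩ := by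
        apply SimpleGraph.ConnectedComponent.sound
        exact SimpleGraph.Adj.reachable (by simp [comap_adj, hadj])
      rw [copyMap_of_not_mem H R m f hu, copyMap_of_not_mem H R m f hv]
      exact ⟨f ((H.induce Rᶜ).connectedComponentMk ⟨u, hu⟩), rfl,
        congrArg f hcc.symm, hadj⟩

/-- The copy of `H` inside `H_R^m` determined by `f`. -/
noncomputable def copySubgraph {α : Type*} (H : SimpleGraph α) (R : Set α) (m : ℕ) (hm : 1 ≤ m)
    (f : (H.induce Rᶜ).ConnectedComponent → Fin m) : (blowupGraph H R m).Subgraph where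
  verts := Set.range (copyMap H R m f)
  Adj a b := ∃ u v, H.Adj u v ∧ copyMap H R m f u = a ∧ copyMap H R m f v = b
  adj_sub := by
    rintro a b ⟨u, v, huv, rfl, rfl⟩
    exact (copyMap_adj H R m hm f u v).2 huv
  edge_vert := by
    rintro a b ⟨u, v, huv, rfl, rfl⟩
    exact ⟨u, rfl⟩
  symm := by
    constructor
    rintro a b ⟨u, v, huv, rfl, rfl⟩
    exact ⟨v, u, huv.symm, rfl, rfl⟩

/-- `H` is isomorphic to the copy determined by `f`. -/
noncomputable def copyIso {α : Type*} (H : SimpleGraph α) (R : Set α) (m : ℕ) (hm : 1 ≤ m)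
    (f : (H.induce Rᶜ).ConnectedComponent → Fin m) :
    H ≃g (copySubgraph H R m hm f).coe where
  toEquiv := Equiv.ofInjective _ (copyMap_injective H R m f)
  map_rel_iff' := by
    intro u v
    constructor
    · rintro ⟨a, b, hab, ha, hb⟩
      have ha' := copyMap_injective H R m f ha
      have hb' := copyMap_injective H R m f hb
      rwa [ha', hb'] at hab
    · intro h
      exact ⟨u, v, h, rfl, rfl⟩

/-- If `R ⊊ V(H)` and `H − R` has at least `k+1` connected components, then the graph
`H_R^{n'}` contains at least `(n')^{k+1}` distinct copies of `H` as a subgraph. -/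
theorem blowup_many_copies {α : Type*} [Fintype α] (H : SimpleGraph α)
    (R : Set α) (hR : R ≠ Set.univ) (n' k : ℕ) (hn' : 1 ≤ n')
    (hcomp : k + 1 ≤ Nat.card (H.induce Rᶜ).ConnectedComponent) :
    n' ^ (k + 1) ≤
      Nat.card {H' : (blowupGraph H R n').Subgraph // Nonempty (H ≃g H'.coe)} := by
  classical
  -- Finiteness of the subgraph type
  have hfin : Finite ((blowupGraph H R n').Subgraph) := by
    have : Function.Injective (fun H' : (blowupGraph H R n').Subgraph =>
        (H'.verts, H'.Adj)) := by
      intro A B h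
      ext <;> simp_all [Prod.ext_iff]
    exact Finite.of_injective _ this
  -- The injection from functions to copies
  set C := (H.induce Rᶜ).ConnectedComponent
  let g : (C → Fin n') → {H' : (blowupGraph H R n').Subgraph // Nonempty (H ≃g H'.coe)} :=
    fun f => ⟨copySubgraph H R n' hn' f, ⟨copyIso H R n' hn' f⟩⟩
  have hg : Function.Injective g := by
    intro f₁ f₂ h
    have hv : Set.range (copyMap H R n' f₁) = Set.range (copyMap H R n' f₂) :=
      congrArg (fun x => x.1.verts) h
    funext c
    obtain ⟨v, rfl⟩ := c.exists_rep
    have hmem : copyMap H R n' f₁ v.val ∈ Set.range (copyMap H R n' f₂) := by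
      rw [← hv]; exact ⟨v.val, rfl⟩
    obtain ⟨w, hw⟩ := hmem
    have hvR : (v : α) ∉ R := v.2
    rw [copyMap_of_not_mem H R n' f₁ hvR] at hw
    by_cases hwR : w ∈ R
    · rw [copyMap_of_mem H R n' f₂ hwR] at hw
      exact absurd hw (by simp)
    · rw [copyMap_of_not_mem H R n' f₂ hwR] at hw
      have hp := Sum.inr_injective hw
      have h2 : (⟨w, hwR⟩ : ↥Rᶜ) = v := congrArg Prod.snd hp
      have h1 : f₂ ((H.induce Rᶜ).connectedComponentMk ⟨w, hwR⟩) =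
          f₁ ((H.induce Rᶜ).connectedComponentMk v) := congrArg Prod.fst hp
      rw [h2] at h1
      exact h1.symm
  have hcard : Nat.card (C → Fin n') ≤
      Nat.card {H' : (blowupGraph H R n').Subgraph // Nonempty (H ≃g H'.coe)} :=
    Nat.card_le_card_of_injective g hg
  have hC : Finite C := by
    have : Finite ↥Rᶜ := Subtype.finite
    exact Quot.finite _
  have hfun : Nat.card (C → Fin n') = n' ^ Nat.card C := by
    rw [Nat.card_fun, Nat.card_eq_fintype_card, Fintype.card_fin]
  calc n' ^ (k + 1) ≤ n' ^ Nat.card C := Nat.pow_le_pow_right hn' hcomp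
    _ = Nat.card (C → Fin n') := hfun.symm
    _ ≤ _ := hcard
end
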